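/- With notation as above, for every 0 ≤ j ≤ n−1 and p ≥ 1 one has e_j d_k^p y^p = e_j ∏_{i=1}^{p}(θ + i − k_{i+j}) and e_j y^p d_k^p = e_j ∏_{i=0}^{p-1}(θ − i − k_{j−i}), as elements of Q = C[∂, y^{±1}]*Γ. -/

import Mathlib

open Finset

/-- ω = e^{2πi/n}, a primitive n-th root of unity. -/
noncomputable def omegaRoot (n : ℕ) : ℂ := Complex.exp (2 * Real.pi * Complex.I / n)

/-- In `Q = ℂ[∂, y^{±1}] * Γ` with the idempotents `e j` and `d_k`, `θ = y∂` as usual,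
for every `0 ≤ j ≤ n-1` and `p ≥ 1`:
`e_j d_k^p y^p = e_j ∏_{i=1}^{p} (θ + i − k_{i+j})` and
`e_j y^p d_k^p = e_j ∏_{i=0}^{p-1} (θ − i − k_{j−i})`. -/
theorem statement2 {Q : Type*} [Ring Q] [Algebra ℂ Q] (n : ℕ) (hn : 0 < n)
    (y yinv d γ : Q)
    (hy : y * yinv = 1) (hy' : yinv * y = 1)
    (hWeyl : d * y - y * d = 1)
    (hγ : γ ^ n = 1)
    (hyγ : y * γ = omegaRoot n • (γ * y))
    (hγd : γ * d = omegaRoot n • (d * γ))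
    (e : ℕ → Q)
    (he : ∀ i, e i = (n : ℂ)⁻¹ • ∑ j ∈ range n, ((omegaRoot n) ^ i • γ) ^ j)
    (k : ℤ → ℂ) (hk0 : k 0 = 0) (hkper : ∀ j : ℤ, k (j + n) = k j)
    (dk θ : Q)
    (hdk : dk = d - yinv * ∑ i ∈ Icc 1 (n - 1), k i • e i)
    (hθ : θ = y * d) :
    ∀ j : ℕ, j < n → ∀ p : ℕ, 1 ≤ p →
      (e j * dk ^ p * y ^ p =
        e j * ((List.range p).map (fun (i : ℕ) =>
          θ + (((i : ℂ) + 1) • (1 : Q)) - (k ((i : ℤ) + 1 + (j : ℤ))) • (1 : Q))).prod)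
      ∧ (e j * y ^ p * dk ^ p =
        e j * ((List.range p).map (fun (i : ℕ) =>
          θ - ((i : ℂ) • (1 : Q)) - (k ((j : ℤ) - (i : ℤ))) • (1 : Q))).prod) := by
  set ω := omegaRoot n with hωdef
  have hnC : (n : ℂ) ≠ 0 := Nat.cast_ne_zero.mpr hn.ne'
  have hω : IsPrimitiveRoot ω n := Complex.isPrimitiveRoot_exp n hn.ne'
  have hωn : ω ^ n = 1 := hω.pow_eq_one
  have hωne : ω ≠ 0 := Complex.exp_ne_zero _
  -- periodicity of k
  have ktrans : ∀ (m t : ℤ), k (m + n * t) = k m := by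
    intro m t
    induction t using Int.induction_on with
    | zero => simp
    | succ t ih =>
        have h : m + (n:ℤ) * (t + 1) = (m + n * t) + n := by ring
        rw [h, hkper, ih]
    | pred t ih =>
        have h1 : m + (n:ℤ) * (-t) = (m + n * (-t - 1)) + n := by ring
        rw [h1, hkper] at ih
        exact ih
  have kmod : ∀ m : ℤ, k (m % (n:ℤ)) = k m := by
    intro m
    conv_rhs => rw [← Int.emod_add_mul_ediv m (n:ℤ)]
    exact (ktrans _ _).symm
  -- basic Weyl relations
  have hdy : d * y = 1 + y * d := by rw [← hWeyl]; abel
  have hyd : y * d = d * y - 1 := by rw [← hWeyl]; abel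
  -- powers of γ commutation
  have hyγp : ∀ m : ℕ, y * γ ^ m = ω ^ m • (γ ^ m * y) := by
    intro m
    induction m with
    | zero => simp
    | succ m ih =>
        rw [pow_succ', ← mul_assoc, hyγ, smul_mul_assoc, mul_assoc, ih, mul_smul_comm,
          smul_smul, ← pow_succ', ← mul_assoc, ← pow_succ']
  have hγdp : ∀ m : ℕ, γ ^ m * d = ω ^ m • (d * γ ^ m) := by
    intro m
    induction m with
    | zero => simp
    | succ m ih =>
        rw [pow_succ, mul_assoc, hγd, mul_smul_comm, ← mul_assoc, ih, smul_mul_assoc,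
          smul_smul, mul_assoc, ← pow_succ, ← pow_succ']
  have he' : ∀ i, e i = (n : ℂ)⁻¹ • ∑ j ∈ range n, (ω ^ i) ^ j • γ ^ j := by
    intro i; rw [he]; congr 1; exact Finset.sum_congr rfl fun j _ => smul_pow _ _ _
  -- y shifts e
  have hey : ∀ i, y * e i = e (i + 1) * y := by
    intro i
    rw [he' i, he' (i+1), mul_smul_comm, smul_mul_assoc, Finset.mul_sum, Finset.sum_mul]
    congr 1
    refine Finset.sum_congr rfl fun j _ => ?_
    rw [mul_smul_comm, hyγp j, smul_smul, smul_mul_assoc]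
    congr 1
    rw [← mul_pow, ← pow_succ]
  have hed : ∀ i, e i * d = d * e (i + 1) := by
    intro i
    rw [he' i, he' (i+1), mul_smul_comm, smul_mul_assoc, Finset.mul_sum, Finset.sum_mul]
    congr 1
    refine Finset.sum_congr rfl fun j _ => ?_
    rw [smul_mul_assoc, hγdp j, smul_smul, mul_smul_comm]
    congr 1
    rw [← mul_pow, ← pow_succ]
  have heyinv : ∀ i, e i * yinv = yinv * e (i + 1) := by
    intro i
    calc e i * yinv = yinv * (y * e i) * yinv := by rw [← mul_assoc, hy', one_mul]
    _ = yinv * (e (i+1) * y) * yinv := by rw [hey]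
    _ = yinv * e (i+1) * (y * yinv) := by rw [← mul_assoc, mul_assoc _ y yinv]
    _ = yinv * e (i + 1) := by rw [hy, mul_one]
  -- γ action on e i
  have hγe : ∀ i, γ * e i = ((ω ^ i) ^ (1:ℕ))⁻¹ • e i := by
    intro i
    have key : ω ^ i • (γ * e i) = e i := by
      have h1 : ∀ j : ℕ, ω ^ i • (γ * ((ω ^ i) ^ j • γ ^ j)) = (ω ^ i) ^ (j+1) • γ ^ (j+1) := by
        intro j; rw [mul_smul_comm, smul_smul, ← pow_succ', ← pow_succ']
      have h2 : (ω ^ i) ^ n • γ ^ n = (ω ^ i) ^ 0 • γ ^ 0 := by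
        rw [hγ, ← pow_mul, mul_comm i n, pow_mul, hωn, one_pow]; simp
      have h4 : ∑ j ∈ range n, (ω ^ i) ^ (j+1) • γ ^ (j+1)
          = ∑ j ∈ range n, (ω ^ i) ^ j • γ ^ j := by
        have h3 := Finset.sum_range_succ' (fun m => (ω ^ i) ^ m • γ ^ m) n
        rw [Finset.sum_range_succ, h2] at h3
        exact (add_right_cancel h3).symm
      calc ω ^ i • (γ * e i)
          = (n:ℂ)⁻¹ • ∑ j ∈ range n, ω ^ i • (γ * ((ω ^ i) ^ j • γ ^ j)) := by
            rw [he' i, mul_smul_comm, Finset.mul_sum, smul_comm (ω ^ i) ((n:ℂ)⁻¹),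
              Finset.smul_sum]
        _ = (n:ℂ)⁻¹ • ∑ j ∈ range n, (ω ^ i) ^ (j+1) • γ ^ (j+1) := by
            rw [Finset.sum_congr rfl fun j _ => h1 j]
        _ = (n:ℂ)⁻¹ • ∑ j ∈ range n, (ω ^ i) ^ j • γ ^ j := by rw [h4]
        _ = e i := (he' i).symm
    have hne : (ω : ℂ) ^ i ≠ 0 := pow_ne_zero _ hωne
    rw [pow_one]
    exact ((inv_smul_eq_iff₀ hne).mpr key.symm).symm
  have hγme : ∀ (m i : ℕ), γ ^ m * e i = ((ω ^ i) ^ m)⁻¹ • e i := by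
    intro m i
    induction m with
    | zero => simp
    | succ m ih =>
        rw [pow_succ', mul_assoc, ih, mul_smul_comm, hγe, smul_smul, pow_one]
        congr 1
        rw [pow_succ']
        ring
  have hee : ∀ a b : ℕ, e a * e b
      = ((n:ℂ)⁻¹ * ∑ j ∈ range n, (ω ^ a * (ω ^ b)⁻¹) ^ j) • e b := by
    intro a b
    rw [he' a, smul_mul_assoc, Finset.sum_mul]
    have h1 : ∀ j, ((ω ^ a) ^ j • γ ^ j) * e b = ((ω ^ a * (ω ^ b)⁻¹) ^ j) • e b := by
      intro j
      rw [smul_mul_assoc, hγme j b, smul_smul, mul_pow, inv_pow]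
    rw [Finset.sum_congr rfl fun j _ => h1 j, ← Finset.sum_smul, smul_smul]
  have heeq : ∀ a b : ℕ, ω ^ a = ω ^ b → e a * e b = e b := by
    intro a b hab
    rw [hee a b, hab, mul_inv_cancel₀ (pow_ne_zero _ hωne)]
    simp [Finset.sum_const, inv_mul_cancel₀ hnC]
  have hene : ∀ a b : ℕ, ω ^ a ≠ ω ^ b → e a * e b = 0 := by
    intro a b hab
    have hz1 : ω ^ a * (ω ^ b)⁻¹ ≠ 1 := by
      exact fun h => hab ((mul_inv_eq_one₀ (pow_ne_zero _ hωne)).mp h)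
    have hzn : (ω ^ a * (ω ^ b)⁻¹) ^ n = 1 := by
      rw [mul_pow, inv_pow, ← pow_mul, ← pow_mul, mul_comm a n, mul_comm b n,
        pow_mul, pow_mul, hωn, one_pow, one_pow]
      simp
    rw [hee a b, geom_sum_eq hz1, hzn]
    simp
  -- pow_eq_pow criterion
  have hkey : ∀ c : ℕ, ω ^ c = ω ^ (c % n) := by
    intro c
    conv_lhs => rw [← Nat.mod_add_div c n]
    rw [pow_add, pow_mul, hωn, one_pow, mul_one]
  have hpow_iff : ∀ a b : ℕ, ω ^ a = ω ^ b ↔ a ≡ b [MOD n] := by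
    have main : ∀ a b : ℕ, b ≤ a → ω ^ a = ω ^ b → a ≡ b [MOD n] := by
      intro a b hba h
      have h2 : ω ^ b * ω ^ (a - b) = ω ^ b * 1 := by
        rw [mul_one, ← pow_add, ← h]
        congr 1
        omega
      have h1 : ω ^ (a - b) = 1 := mul_left_cancel₀ (pow_ne_zero _ hωne) h2
      have hdvd : n ∣ a - b := (hω.pow_eq_one_iff_dvd _).mp h1
      exact ((Nat.modEq_iff_dvd' hba).mpr hdvd).symm
    intro a b
    constructor
    · intro h
      rcases le_total b a with hba | hab
      · exact main a b hba h
      · exact (main b a hab h.symm).symm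
    · intro h
      rw [hkey a, hkey b, h]
  -- periodicity of e
  have heper : ∀ i, e (i + n) = e i := by
    intro i
    rw [he, he]
    congr 2
    rw [pow_add, hωn, mul_one]
  have heperm : ∀ (i m : ℕ), e (i + m * n) = e i := by
    intro i m
    induction m with
    | zero => simp
    | succ m ih => rw [Nat.succ_mul, ← add_assoc, heper, ih]
  -- θ relations
  have hθy : θ * y = y * θ + y := by
    rw [hθ, mul_assoc, hdy, mul_add, mul_one, ← mul_assoc, add_comm]
  have hθd : θ * d = d * θ - d := by
    have h : d * θ = d + θ * d := by
      rw [hθ, ← mul_assoc, hdy, add_mul, one_mul]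
    rw [h]; abel
  have h1' : y * d * yinv = d - yinv := by
    rw [hyd, sub_mul, one_mul, mul_assoc, hy, mul_one]
  have h2' : yinv * (y * d) = d := by rw [← mul_assoc, hy', one_mul]
  have hθyinv : θ * yinv = yinv * θ - yinv := by
    rw [hθ, h1', h2']
  -- scalar helpers
  have hsc : ∀ (c : ℂ) (x : Q), (c • (1:Q)) * x = c • x := by
    intro c x; rw [smul_mul_assoc, one_mul]
  have hcs : ∀ (c : ℂ) (x : Q), x * (c • (1:Q)) = c • x := by
    intro c x; rw [mul_smul_comm, mul_one]
  -- F-commutation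
  have hFy : ∀ c : ℂ, (θ + c • (1:Q)) * y = y * (θ + (c+1) • (1:Q)) := by
    intro c
    rw [add_mul, mul_add, hθy, hsc, hcs, add_smul, one_smul]
    abel
  have hFd : ∀ c : ℂ, (θ + c • (1:Q)) * d = d * (θ + (c-1) • (1:Q)) := by
    intro c
    rw [add_mul, mul_add, hθd, hsc, hcs, sub_smul, one_smul]
    abel
  have hFyinv : ∀ c : ℂ, (θ + c • (1:Q)) * yinv = yinv * (θ + (c-1) • (1:Q)) := by
    intro c
    rw [add_mul, mul_add, hθyinv, hsc, hcs, sub_smul, one_smul]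
    abel
  have hFX : ∀ (c κ : ℂ), (θ + c • (1:Q)) * (d - κ • yinv)
      = (d - κ • yinv) * (θ + (c-1) • (1:Q)) := by
    intro c κ
    rw [mul_sub, sub_mul, hFd c, mul_smul_comm, hFyinv c, smul_mul_assoc]
  have heθ : ∀ i, e i * θ = θ * e i := by
    intro i
    have hi : i + n - 1 + 1 = i + n := by omega
    have hy1 : e i * y = y * e (i + n - 1) := by
      have := (hey (i + n - 1)).symm
      rw [hi] at this
      rw [← heper i]
      exact this
    rw [hθ, ← mul_assoc, hy1, mul_assoc, hed, hi, heper, ← mul_assoc]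
  have hFe : ∀ (c : ℂ) (i : ℕ), e i * (θ + c • (1:Q)) = (θ + c • (1:Q)) * e i := by
    intro c i
    rw [mul_add, add_mul, heθ, hcs, hsc]
  -- list product lemmas
  have hle : ∀ (l : List ℂ) (i : ℕ),
      e i * (l.map (fun c => θ + c • (1:Q))).prod
        = (l.map (fun c => θ + c • (1:Q))).prod * e i := by
    intro l i
    induction l with
    | nil => simp
    | cons c l ih =>
        rw [List.map_cons, List.prod_cons, ← mul_assoc, hFe, mul_assoc, ih, ← mul_assoc]
  have hly : ∀ l : List ℂ,
      (l.map (fun c => θ + c • (1:Q))).prod * y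
        = y * ((l.map (fun c => c + 1)).map (fun c => θ + c • (1:Q))).prod := by
    intro l
    induction l with
    | nil => simp
    | cons c l ih =>
        rw [List.map_cons, List.prod_cons, List.map_cons, List.map_cons, List.prod_cons,
          mul_assoc, ih, ← mul_assoc, hFy, mul_assoc]
  have hlX : ∀ (l : List ℂ) (κ : ℂ),
      (l.map (fun c => θ + c • (1:Q))).prod * (d - κ • yinv)
        = (d - κ • yinv) * ((l.map (fun c => c - 1)).map (fun c => θ + c • (1:Q))).prod := by
    intro l κ
    induction l with
    | nil => simp
    | cons c l ih =>
        rw [List.map_cons, List.prod_cons, List.map_cons, List.map_cons, List.prod_cons,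
          mul_assoc, ih, ← mul_assoc, hFX, mul_assoc]
  -- the key projection identity
  have hsum : ∀ j : ℕ, e (j+1) * (∑ i ∈ Icc 1 (n-1), k i • e i)
      = k ((j:ℤ)+1) • e (j+1) := by
    intro j
    rw [Finset.mul_sum]
    have hterm : ∀ i : ℕ, e (j+1) * (k (i:ℤ) • e i) = k (i:ℤ) • (e (j+1) * e i) :=
      fun i => mul_smul_comm _ _ _
    rw [Finset.sum_congr rfl fun i _ => hterm i]
    have hcast : ((((j+1) % n : ℕ)) : ℤ) = ((j:ℤ)+1) % (n:ℤ) := by push_cast; ring_nf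
    by_cases hr : (j+1) % n = 0
    · have hkz : k ((j:ℤ)+1) = 0 := by
        rw [← kmod ((j:ℤ)+1), ← hcast, hr]
        exact_mod_cast hk0
      rw [hkz, zero_smul]
      refine Finset.sum_eq_zero fun i hi => ?_
      rw [Finset.mem_Icc] at hi
      have hωj : ω ^ (j+1) = ω ^ (0:ℕ) := by
        rw [hpow_iff]
        unfold Nat.ModEq
        simp [hr]
      have hωi : ω ^ (j+1) ≠ ω ^ i := by
        rw [hωj, pow_zero]
        intro h
        exact hω.pow_ne_one_of_pos_of_lt (by omega) (by omega) h.symm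
      rw [hene _ _ hωi, smul_zero]
    · set r := (j+1) % n with hrdef
      have hrn : r < n := Nat.mod_lt _ hn
      have hrIcc : r ∈ Icc 1 (n-1) := by
        rw [Finset.mem_Icc]
        omega
      have hsum1 : ∑ i ∈ Icc 1 (n-1), k i • (e (j+1) * e i) = k r • (e (j+1) * e r) := by
        refine Finset.sum_eq_single r (fun i hi hir => ?_) (fun h => absurd hrIcc h)
        rw [Finset.mem_Icc] at hi
        have hωi : ω ^ (j+1) ≠ ω ^ i := by
          intro h
          have hmod := (hpow_iff _ _).mp h
          unfold Nat.ModEq at hmod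
          rw [Nat.mod_eq_of_lt (by omega : i < n)] at hmod
          exact hir (hmod.symm ▸ rfl)
        rw [hene _ _ hωi, smul_zero]
      have hωr : ω ^ (j+1) = ω ^ r := by
        rw [hpow_iff]
        unfold Nat.ModEq
        rw [Nat.mod_eq_of_lt hrn]
      have her : e r = e (j+1) := by
        have h := heperm r ((j+1)/n)
        rw [show r + (j+1)/n * n = j + 1 from by rw [hrdef]; exact Nat.mod_add_div' (j+1) n] at h
        exact h.symm
      have hkr : k (r:ℤ) = k ((j:ℤ)+1) := by
        rw [← kmod ((j:ℤ)+1), ← hcast]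
      rw [hsum1, heeq _ _ hωr, her, ← hkr]
  have P1 : ∀ j : ℕ, e j * dk = (d - k ((j:ℤ)+1) • yinv) * e (j+1) := by
    intro j
    rw [hdk, mul_sub, ← mul_assoc, heyinv j, mul_assoc, hsum j, hed j, mul_smul_comm,
      sub_mul, smul_mul_assoc]
  -- the two scalar products with y
  have hA0 : ∀ κ : ℂ, (d - κ • yinv) * y = θ + (1 - κ) • (1:Q) := by
    intro κ
    rw [sub_mul, smul_mul_assoc, hy', hdy, ← hθ, sub_smul, one_smul]
    abel
  have hB0 : ∀ κ : ℂ, y * (d - κ • yinv) = θ + (-κ) • (1:Q) := by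
    intro κ
    rw [mul_sub, mul_smul_comm, hy, ← hθ, neg_smul, ← sub_eq_add_neg]
  -- commuting a factor-product past e
  have hcomm : ∀ (c : ℂ) (l : List ℂ) (i : ℕ),
      (θ + c • (1:Q)) * (l.map (fun c => θ + c • (1:Q))).prod * e i
        = e i * ((θ + c • (1:Q)) * (l.map (fun c => θ + c • (1:Q))).prod) := by
    intro c l i
    rw [mul_assoc, ← hle, ← mul_assoc, ← hFe, mul_assoc]
  -- claim A
  have claimA : ∀ (p j : ℕ), e j * dk ^ p * y ^ p =
      e j * (((List.range p).map (fun i : ℕ => (i:ℂ) + 1 - k ((i:ℤ) + 1 + (j:ℤ)))).map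
        (fun c => θ + c • (1:Q))).prod := by
    intro p
    induction p with
    | zero => intro j; simp
    | succ p ih =>
        intro j
        have hlist : (List.range (p+1)).map (fun i : ℕ => (i:ℂ) + 1 - k ((i:ℤ) + 1 + (j:ℤ)))
            = (1 - k ((j:ℤ)+1)) ::
              ((List.range p).map (fun i : ℕ => (i:ℂ) + 1 - k ((i:ℤ) + 1 + ((j+1:ℕ):ℤ)))).map
                (fun c => c + 1) := by
          rw [List.range_succ_eq_map, List.map_cons, List.map_map]
          congr 1
          · rw [show ((0:ℕ):ℤ) + 1 + (j:ℤ) = (j:ℤ) + 1 by push_cast; ring]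
            norm_num
          · rw [List.map_map]
            apply List.map_congr_left
            intro i _
            simp only [Function.comp]
            push_cast
            rw [show (i:ℤ) + 1 + 1 + (j:ℤ) = (i:ℤ) + 1 + ((j:ℤ)+1) by ring]
            ring
        calc e j * dk ^ (p+1) * y ^ (p+1)
            = e j * dk * dk ^ p * y ^ p * y := by
              rw [pow_succ' dk, pow_succ y, ← mul_assoc (e j) dk (dk ^ p),
                ← mul_assoc (e j * dk * dk ^ p) (y ^ p) y]
          _ = (d - k ((j:ℤ)+1) • yinv) * e (j+1) * dk ^ p * y ^ p * y := by rw [P1 j]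
          _ = (d - k ((j:ℤ)+1) • yinv) * (e (j+1) * dk ^ p * y ^ p) * y := by
              rw [mul_assoc (d - k ((j:ℤ)+1) • yinv) (e (j+1)) (dk ^ p),
                mul_assoc (d - k ((j:ℤ)+1) • yinv) (e (j+1) * dk ^ p) (y ^ p)]
          _ = (d - k ((j:ℤ)+1) • yinv) *
                (e (j+1) * (((List.range p).map
                    (fun i : ℕ => (i:ℂ) + 1 - k ((i:ℤ) + 1 + ((j+1:ℕ):ℤ)))).map
                  (fun c => θ + c • (1:Q))).prod) * y := by rw [ih (j+1)]
          _ = (d - k ((j:ℤ)+1) • yinv) *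
                ((((List.range p).map
                    (fun i : ℕ => (i:ℂ) + 1 - k ((i:ℤ) + 1 + ((j+1:ℕ):ℤ)))).map
                  (fun c => θ + c • (1:Q))).prod * e (j+1)) * y := by rw [hle]
          _ = (d - k ((j:ℤ)+1) • yinv) *
                (((List.range p).map
                    (fun i : ℕ => (i:ℂ) + 1 - k ((i:ℤ) + 1 + ((j+1:ℕ):ℤ)))).map
                  (fun c => θ + c • (1:Q))).prod * (e (j+1) * y) := by
              rw [← mul_assoc, mul_assoc _ (e (j+1)) y]
          _ = (d - k ((j:ℤ)+1) • yinv) *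
                (((List.range p).map
                    (fun i : ℕ => (i:ℂ) + 1 - k ((i:ℤ) + 1 + ((j+1:ℕ):ℤ)))).map
                  (fun c => θ + c • (1:Q))).prod * (y * e j) := by rw [← hey j]
          _ = (d - k ((j:ℤ)+1) • yinv) *
                ((((List.range p).map
                    (fun i : ℕ => (i:ℂ) + 1 - k ((i:ℤ) + 1 + ((j+1:ℕ):ℤ)))).map
                  (fun c => θ + c • (1:Q))).prod * y) * e j := by
              rw [mul_assoc, mul_assoc, mul_assoc]
          _ = (d - k ((j:ℤ)+1) • yinv) *
                (y * ((((List.range p).map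
                    (fun i : ℕ => (i:ℂ) + 1 - k ((i:ℤ) + 1 + ((j+1:ℕ):ℤ)))).map
                  (fun c => c + 1)).map (fun c => θ + c • (1:Q))).prod) * e j := by
              rw [hly]
          _ = ((d - k ((j:ℤ)+1) • yinv) * y) *
                ((((List.range p).map
                    (fun i : ℕ => (i:ℂ) + 1 - k ((i:ℤ) + 1 + ((j+1:ℕ):ℤ)))).map
                  (fun c => c + 1)).map (fun c => θ + c • (1:Q))).prod * e j := by
              rw [← mul_assoc]
          _ = (θ + (1 - k ((j:ℤ)+1)) • (1:Q)) *
                ((((List.range p).map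
                    (fun i : ℕ => (i:ℂ) + 1 - k ((i:ℤ) + 1 + ((j+1:ℕ):ℤ)))).map
                  (fun c => c + 1)).map (fun c => θ + c • (1:Q))).prod * e j := by
              rw [hA0]
          _ = e j * ((θ + (1 - k ((j:ℤ)+1)) • (1:Q)) *
                ((((List.range p).map
                    (fun i : ℕ => (i:ℂ) + 1 - k ((i:ℤ) + 1 + ((j+1:ℕ):ℤ)))).map
                  (fun c => c + 1)).map (fun c => θ + c • (1:Q))).prod) := by
              rw [hcomm]
          _ = e j * (((List.range (p+1)).map
                (fun i : ℕ => (i:ℂ) + 1 - k ((i:ℤ) + 1 + (j:ℤ)))).map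
                (fun c => θ + c • (1:Q))).prod := by
              rw [hlist, List.map_cons, List.prod_cons]
  -- claim B
  have claimB : ∀ (p j : ℕ), e (j + p) * y ^ p * dk ^ p =
      e (j + p) * (((List.range p).map (fun i : ℕ => -(i:ℂ) - k ((j:ℤ) + p - i))).map
        (fun c => θ + c • (1:Q))).prod := by
    intro p
    induction p with
    | zero => intro j; simp
    | succ p ih =>
        intro j
        have hlist : (List.range (p+1)).map (fun i : ℕ => -(i:ℂ) - k ((j:ℤ) + (p+1:ℕ) - i))
            = (-(k (((j+p+1:ℕ)):ℤ))) ::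
              ((List.range p).map (fun i : ℕ => -(i:ℂ) - k ((j:ℤ) + p - i))).map
                (fun c => c - 1) := by
          rw [List.range_succ_eq_map, List.map_cons, List.map_map]
          congr 1
          · rw [show (j:ℤ) + ((p+1:ℕ):ℤ) - ((0:ℕ):ℤ) = (((j+p+1:ℕ)):ℤ) by push_cast; ring]
            norm_num
          · rw [List.map_map]
            apply List.map_congr_left
            intro i _
            simp only [Function.comp]
            push_cast
            rw [show (j:ℤ) + ((p:ℤ)+1) - ((i:ℤ)+1) = (j:ℤ) + (p:ℤ) - (i:ℤ) by ring]
            ring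
        calc e (j + (p+1)) * y ^ (p+1) * dk ^ (p+1)
            = e (j + p + 1) * y * (y ^ p * dk ^ p) * dk := by
              rw [show j + (p+1) = j + p + 1 by omega]
              rw [pow_succ' y, pow_succ dk, ← mul_assoc (e (j+p+1)) y (y ^ p),
                ← mul_assoc (e (j+p+1) * y * y ^ p) (dk ^ p) dk,
                mul_assoc (e (j+p+1) * y) (y ^ p) (dk ^ p)]
          _ = y * e (j + p) * (y ^ p * dk ^ p) * dk := by rw [← hey (j+p)]
          _ = y * (e (j + p) * y ^ p * dk ^ p) * dk := by
              rw [mul_assoc y (e (j+p)) _, mul_assoc (e (j+p)) (y ^ p) (dk ^ p)]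
          _ = y * (e (j + p) * (((List.range p).map
                  (fun i : ℕ => -(i:ℂ) - k ((j:ℤ) + p - i))).map
                (fun c => θ + c • (1:Q))).prod) * dk := by rw [ih j]
          _ = y * ((((List.range p).map
                  (fun i : ℕ => -(i:ℂ) - k ((j:ℤ) + p - i))).map
                (fun c => θ + c • (1:Q))).prod * e (j + p)) * dk := by rw [hle]
          _ = y * (((List.range p).map
                  (fun i : ℕ => -(i:ℂ) - k ((j:ℤ) + p - i))).map
                (fun c => θ + c • (1:Q))).prod * (e (j + p) * dk) := by
              rw [← mul_assoc, mul_assoc _ (e (j+p)) dk]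
          _ = y * (((List.range p).map
                  (fun i : ℕ => -(i:ℂ) - k ((j:ℤ) + p - i))).map
                (fun c => θ + c • (1:Q))).prod *
                ((d - k (((j+p:ℕ):ℤ)+1) • yinv) * e (j + p + 1)) := by rw [P1 (j+p)]
          _ = y * ((((List.range p).map
                  (fun i : ℕ => -(i:ℂ) - k ((j:ℤ) + p - i))).map
                (fun c => θ + c • (1:Q))).prod * (d - k (((j+p:ℕ):ℤ)+1) • yinv)) *
                e (j + p + 1) := by
              rw [mul_assoc, mul_assoc, mul_assoc]
          _ = y * ((d - k (((j+p:ℕ):ℤ)+1) • yinv) *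
                ((((List.range p).map
                  (fun i : ℕ => -(i:ℂ) - k ((j:ℤ) + p - i))).map
                (fun c => c - 1)).map (fun c => θ + c • (1:Q))).prod) * e (j + p + 1) := by
              rw [hlX]
          _ = (y * (d - k (((j+p:ℕ):ℤ)+1) • yinv)) *
                ((((List.range p).map
                  (fun i : ℕ => -(i:ℂ) - k ((j:ℤ) + p - i))).map
                (fun c => c - 1)).map (fun c => θ + c • (1:Q))).prod * e (j + p + 1) := by
              rw [← mul_assoc]
          _ = (θ + (-(k (((j+p:ℕ):ℤ)+1))) • (1:Q)) *
                ((((List.range p).map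
                  (fun i : ℕ => -(i:ℂ) - k ((j:ℤ) + p - i))).map
                (fun c => c - 1)).map (fun c => θ + c • (1:Q))).prod * e (j + p + 1) := by
              rw [hB0]
          _ = e (j + p + 1) * ((θ + (-(k (((j+p:ℕ):ℤ)+1))) • (1:Q)) *
                ((((List.range p).map
                  (fun i : ℕ => -(i:ℂ) - k ((j:ℤ) + p - i))).map
                (fun c => c - 1)).map (fun c => θ + c • (1:Q))).prod) := by
              exact hcomm _ _ _
          _ = e (j + (p+1)) * (((List.range (p+1)).map
                (fun i : ℕ => -(i:ℂ) - k ((j:ℤ) + (p+1:ℕ) - i))).map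
                (fun c => θ + c • (1:Q))).prod := by
              rw [show j + (p+1) = j + p + 1 by omega]
              rw [hlist, List.map_cons, List.prod_cons]
              rw [show (((j+p+1:ℕ)):ℤ) = ((j+p:ℕ):ℤ) + 1 by push_cast; ring]
  -- assemble
  intro j hj p hp
  constructor
  · rw [claimA p j, List.map_map]
    congr 2
    apply List.map_congr_left
    intro i _
    simp only [Function.comp]
    rw [sub_smul, add_sub_assoc]
  · have hB := claimB p (j + p * (n-1))
    have hidx : j + p * (n-1) + p = j + p * n := by
      have : p * (n-1) + p = p * n := by
        cases n with
        | zero => omega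
        | succ m => simp [Nat.mul_succ, Nat.succ_sub_one]
      omega
    rw [hidx] at hB
    rw [heperm j p] at hB
    rw [hB, List.map_map]
    congr 2
    apply List.map_congr_left
    intro i _
    simp only [Function.comp]
    have harg : ((j + p * (n-1) : ℕ):ℤ) + (p:ℕ) - (i:ℤ) = ((j:ℤ) - (i:ℤ)) + (n:ℤ) * (p:ℤ) := by
      push_cast [Nat.cast_sub (by omega : 1 ≤ n)]
      ring
    rw [harg, ktrans ((j:ℤ) - (i:ℤ)) (p:ℤ), sub_smul, neg_smul]
    abel
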